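/- Let (R, 𝔪) be a local commutative artinian principal ideal ring of length n as a module over itself, M a finitely generated R-module, N an R-module isomorphic to R, and ⟨,⟩ : M × M → N a non-degenerate symmetric R-bilinear form. Then M admits an orthogonal decomposition M = M_1 ⊥ M_2 ⊥ ... ⊥ M_n, where each M_i is a free module over R/𝔪^i and the restriction of ⟨,⟩ to each M_i is non-degenerate (i.e. M_i ∩ M_i^⊥ = 0). -/

import Mathlib

/-- The orthogonal complement of a submodule with respect to a bilinear form. -/
def orth {R M N : Type*} [CommRing R] [AddCommGroup M] [Module R M]
    [AddCommGroup N] [Module R N] (B : M →ₗ[R] M →ₗ[R] N) (L : Submodule R M) :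
    Submodule R M where
  carrier := {x | ∀ l ∈ L, B x l = 0}
  add_mem' := by
    intro a b ha hb l hl
    simp [ha l hl, hb l hl]
  zero_mem' := by intro l hl; simp
  smul_mem' := by
    intro c a ha l hl
    simp [ha l hl]

section RingFacts

variable {R : Type*} [CommRing R] [IsLocalRing R]

lemma exists_unit_rep {π : R} (hπ : IsLocalRing.maximalIdeal R = Ideal.span {π})
    {k : ℕ} (hk : π ^ k = 0) {c : R} (hc : c ≠ 0) :
    ∃ j, j < k ∧ ∃ t : R, IsUnit t ∧ c = t * π ^ j := by
  classical
  have hex : ∃ i, c ∉ Ideal.span {π ^ i} := by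
    refine ⟨k, fun h => hc ?_⟩
    rw [hk] at h
    obtain ⟨a, ha⟩ := Ideal.mem_span_singleton'.mp h
    rw [← ha, mul_zero]
  have hfpos : 0 < Nat.find hex := by
    rcases Nat.eq_zero_or_pos (Nat.find hex) with h0 | h
    · exfalso
      apply Nat.find_spec hex
      rw [h0, pow_zero]
      exact Ideal.mem_span_singleton'.mpr ⟨c, by ring⟩
    · exact h
  have key : ∃ j₀, 0 < j₀ ∧ j₀ ≤ k ∧ c ∉ Ideal.span {π ^ j₀} ∧ c ∈ Ideal.span {π ^ (j₀ - 1)} := by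
    refine ⟨Nat.find hex, hfpos, ?_, Nat.find_spec hex, ?_⟩
    · refine Nat.find_min' hex (by
        intro h
        rw [hk] at h
        obtain ⟨a, ha⟩ := Ideal.mem_span_singleton'.mp h
        exact hc (by rw [← ha, mul_zero]))
    · by_contra h
      exact Nat.find_min hex (by omega) h
  obtain ⟨j₀, hj₀pos, hj₀k, hspec, hmem⟩ := key
  obtain ⟨t, ht⟩ := Ideal.mem_span_singleton'.mp hmem
  have htu : IsUnit t := by
    rw [← IsLocalRing.notMem_maximalIdeal, hπ]
    intro htm
    obtain ⟨s, hs⟩ := Ideal.mem_span_singleton'.mp htm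
    apply hspec
    refine Ideal.mem_span_singleton'.mpr ⟨s, ?_⟩
    rw [show j₀ = (j₀ - 1) + 1 from by omega, pow_succ, ← ht, ← hs]
    ring
  exact ⟨j₀ - 1, by omega, t, htu, ht.symm⟩

lemma mem_ann_pow {π : R} (hπ : IsLocalRing.maximalIdeal R = Ideal.span {π})
    {n : ℕ} (hn0 : π ^ n = 0) (hne : ∀ j, j < n → π ^ j ≠ 0)
    {j : ℕ} (hj : j ≤ n) {r : R} (hr : r * π ^ j = 0) : r ∈ Ideal.span {π ^ (n - j)} := by
  rcases eq_or_ne r 0 with rfl | hr0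
  · exact zero_mem _
  obtain ⟨i, hik, t, htu, rfl⟩ := exists_unit_rep hπ hn0 hr0
  have h0 : π ^ (i + j) = 0 := by
    have h1 : t * π ^ (i + j) = 0 := by rw [pow_add, ← mul_assoc]; exact hr
    exact (IsUnit.mul_right_eq_zero htu).mp h1
  have hge : n ≤ i + j := by
    by_contra h
    exact hne _ (by omega) h0
  have hsplit : π ^ i = π ^ (i - (n - j)) * π ^ (n - j) := by
    rw [← pow_add]; congr 1; omega
  exact Ideal.mem_span_singleton'.mpr ⟨t * π ^ (i - (n - j)), by rw [hsplit]; ring⟩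

lemma exists_unit_gen {π : R} (hπ : IsLocalRing.maximalIdeal R = Ideal.span {π})
    {n : ℕ} (hn0 : π ^ n = 0) (hne : ∀ j, j < n → π ^ j ≠ 0)
    {a : ℕ} (ha1 : 1 ≤ a) (han : a ≤ n)
    {c : R} (hc : π ^ a * c = 0) (hc' : π ^ (a - 1) * c ≠ 0) :
    ∃ w : R, IsUnit w ∧ c = w * π ^ (n - a) := by
  have h1 : c ∈ Ideal.span {π ^ (n - a)} :=
    mem_ann_pow hπ hn0 hne han (by rw [mul_comm]; exact hc)
  obtain ⟨t, ht⟩ := Ideal.mem_span_singleton'.mp h1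
  refine ⟨t, ?_, ht.symm⟩
  rw [← IsLocalRing.notMem_maximalIdeal, hπ]
  intro htm
  obtain ⟨s, hs⟩ := Ideal.mem_span_singleton'.mp htm
  apply hc'
  have hpow : π ^ (a - 1) * π ^ (n - a) * π = π ^ n := by
    rw [← pow_add, ← pow_succ]; congr 1; omega
  rw [← ht, ← hs, show π ^ (a - 1) * (s * π * π ^ (n - a)) = s * (π ^ (a - 1) * π ^ (n - a) * π) from by ring,
    hpow, hn0, mul_zero]

lemma smul_eq_zero_of_mem {M : Type*} [AddCommGroup M] [Module R M] {π : R} {a : ℕ}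
    {r : R} (hr : r ∈ Ideal.span {π ^ a}) {m : M} (hm : π ^ a • m = 0) : r • m = 0 := by
  obtain ⟨t, ht⟩ := Ideal.mem_span_singleton'.mp hr
  rw [← ht, mul_smul, hm, smul_zero]

end RingFacts

section Pieces

variable {R M : Type*} [CommRing R] [AddCommGroup M] [Module R M]

lemma piece_equiv (I : Ideal R) (r : ℕ) (v : Fin r → M)
    (hkill : ∀ i, ∀ c ∈ I, c • v i = 0)
    (hcoef : ∀ c : Fin r → R, ∑ i, c i • v i = 0 → ∀ i, c i ∈ I) :
    Nonempty ((↥(Submodule.span R (Set.range v))) ≃ₗ[R] (Fin r → R ⧸ I)) := by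
  classical
  let g : Fin r → (R ⧸ I) →ₗ[R] M := fun i =>
    Submodule.liftQ I (LinearMap.toSpanSingleton R M (v i)) (by
      intro c hc
      simp only [LinearMap.mem_ker, LinearMap.toSpanSingleton_apply]
      exact hkill i c hc)
  let ψ : (Fin r → R ⧸ I) →ₗ[R] M := ∑ i, (g i).comp (LinearMap.proj i)
  have hψ : ∀ c : Fin r → R, ψ (fun i => Submodule.Quotient.mk (c i)) = ∑ i, c i • v i := by
    intro c
    simp only [ψ, g, LinearMap.sum_apply, LinearMap.comp_apply, LinearMap.proj_apply,
      Submodule.liftQ_apply, LinearMap.toSpanSingleton_apply]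
  have hrep : ∀ q : Fin r → R ⧸ I, ∃ c : Fin r → R, (fun i => Submodule.Quotient.mk (c i)) = q := by
    intro q
    choose c hc using fun i => Submodule.Quotient.mk_surjective I (q i)
    exact ⟨c, funext hc⟩
  have hinj : Function.Injective ψ := by
    rw [← LinearMap.ker_eq_bot, LinearMap.ker_eq_bot']
    intro q hq
    obtain ⟨c, rfl⟩ := hrep q
    rw [hψ] at hq
    have hci := hcoef c hq
    funext i
    exact (Submodule.Quotient.mk_eq_zero I).mpr (hci i)
  have hrange : LinearMap.range ψ = Submodule.span R (Set.range v) := by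
    apply le_antisymm
    · rintro _ ⟨q, rfl⟩
      obtain ⟨c, rfl⟩ := hrep q
      rw [hψ]
      exact Submodule.sum_mem _ fun i _ =>
        Submodule.smul_mem _ _ (Submodule.subset_span ⟨i, rfl⟩)
    · rw [Submodule.span_le]
      rintro _ ⟨i, rfl⟩
      refine ⟨fun j => Submodule.Quotient.mk (if j = i then 1 else 0), ?_⟩
      rw [hψ]
      simp
  exact ⟨((LinearEquiv.ofInjective ψ hinj).trans (LinearEquiv.ofEq _ _ hrange)).symm⟩

lemma sup_equiv (p q : Submodule R M) (hd : Disjoint p q) :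
    Nonempty (↥(p ⊔ q) ≃ₗ[R] (↥p × ↥q)) := by
  let f : (↥p × ↥q) →ₗ[R] ↥(p ⊔ q) :=
    (Submodule.inclusion (le_sup_left : p ≤ p ⊔ q)).coprod
      (Submodule.inclusion (le_sup_right : q ≤ p ⊔ q))
  have hval : ∀ z : ↥p × ↥q, (f z : M) = (z.1 : M) + (z.2 : M) := fun z => rfl
  have hinj : Function.Injective f := by
    rw [← LinearMap.ker_eq_bot, LinearMap.ker_eq_bot']
    rintro ⟨x, y⟩ h
    have h0 : (x : M) + (y : M) = 0 := by
      have := congrArg (Subtype.val) h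
      simpa [hval] using this
    have hx : (x : M) ∈ q := by
      rw [show (x : M) = -(y : M) from eq_neg_of_add_eq_zero_left h0]
      exact q.neg_mem y.2
    have hx0 : (x : M) = 0 := Submodule.disjoint_def.mp hd _ x.2 hx
    have hy0 : (y : M) = 0 := by rw [← h0, hx0, zero_add]
    refine Prod.ext (Subtype.ext hx0) (Subtype.ext hy0)
  have hsurj : Function.Surjective f := by
    rintro ⟨z, hz⟩
    obtain ⟨u, hu, w, hw, huw⟩ := Submodule.mem_sup.mp hz
    exact ⟨(⟨u, hu⟩, ⟨w, hw⟩), Subtype.ext huw⟩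
  exact ⟨(LinearEquiv.ofBijective f ⟨hinj, hsurj⟩).symm⟩

lemma prod_fun_equiv (Q : Type*) [AddCommGroup Q] [Module R Q] (r s : ℕ) :
    Nonempty (((Fin r → Q) × (Fin s → Q)) ≃ₗ[R] (Fin (r + s) → Q)) :=
  ⟨(LinearEquiv.sumArrowLequivProdArrow _ _ R Q).symm.trans
    (LinearEquiv.funCongrLeft R Q finSumFinEquiv.symm)⟩

end Pieces

lemma mem_orth {R M N : Type*} [CommRing R] [AddCommGroup M] [Module R M]
    [AddCommGroup N] [Module R N] {B : M →ₗ[R] M →ₗ[R] N} {L : Submodule R M} {x : M} :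
    x ∈ orth B L ↔ ∀ l ∈ L, B x l = 0 := Iff.rfl

theorem decomposition_aux {R M : Type*} [CommRing R] [IsLocalRing R] [AddCommGroup M]
    [Module R M] [IsArtinian R M] (π : R) (n : ℕ)
    (hπ : IsLocalRing.maximalIdeal R = Ideal.span {π})
    (hn0 : π ^ n = 0) (hne : ∀ j, j < n → π ^ j ≠ 0)
    (C : M →ₗ[R] M →ₗ[R] R) (hC : ∀ x y, C x y = C y x) (W : Submodule R M) :
    (∀ x ∈ W, (∀ y ∈ W, C x y = 0) → x = 0) →
    ∃ (V : Fin n → Submodule R M) (k : Fin n → ℕ),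
      (∀ i, V i ≤ W) ∧ iSupIndep V ∧ (⨆ i, V i) = W ∧
      (∀ i j, i ≠ j → ∀ x ∈ V i, ∀ y ∈ V j, C x y = 0) ∧
      (∀ i, Nonempty
        (↥(V i) ≃ₗ[R] (Fin (k i) → R ⧸ (IsLocalRing.maximalIdeal R) ^ (i.val + 1)))) := by
  induction W using IsArtinian.induction with
  | _ W IH =>
  intro hndg
  classical
  have hmm : ∀ b : ℕ, (IsLocalRing.maximalIdeal R) ^ b = Ideal.span {π ^ b} := by
    intro b; rw [hπ, Ideal.span_singleton_pow]
  by_cases hWbot : W = ⊥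
  · refine ⟨fun _ => ⊥, fun _ => 0, fun _ => bot_le, fun i => disjoint_bot_left, ?_, ?_, ?_⟩
    · rw [hWbot]; simp
    · intro i j _ x hx y hy
      have hx0 : x = 0 := by simpa using hx
      simp [hx0]
    · intro i
      exact ⟨LinearEquiv.ofSubsingleton _ _⟩
  -- W ≠ ⊥
  have hexP : ∃ j : ℕ, ∀ m ∈ W, π ^ j • m = 0 := ⟨n, fun m _ => by rw [hn0, zero_smul]⟩
  have keyA : ∃ a, 1 ≤ a ∧ a ≤ n ∧ (∀ m ∈ W, π ^ a • m = 0) ∧ (∃ m ∈ W, π ^ (a - 1) • m ≠ 0) := by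
    refine ⟨Nat.find hexP, ?_, ?_, Nat.find_spec hexP, ?_⟩
    · rcases Nat.eq_zero_or_pos (Nat.find hexP) with h0 | h
      · exfalso
        apply hWbot
        rw [eq_bot_iff]
        intro m hm
        have hm0 := Nat.find_spec hexP m hm
        rw [h0, pow_zero, one_smul] at hm0
        simp [hm0]
      · exact h
    · exact Nat.find_min' hexP (fun m _ => by rw [hn0, zero_smul])
    · by_contra h
      push_neg at h
      exact Nat.find_min hexP (show Nat.find hexP - 1 < Nat.find hexP by
        have := Nat.find_spec hexP
        rcases Nat.eq_zero_or_pos (Nat.find hexP) with h0 | hpos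
        · exfalso
          apply hWbot
          rw [eq_bot_iff]
          intro m hm
          have hm0 := Nat.find_spec hexP m hm
          rw [h0, pow_zero, one_smul] at hm0
          simp [hm0]
        · omega) h
  obtain ⟨a, ha1, han, haW, hamin⟩ := keyA
  have hxy : ∃ x ∈ W, ∃ y ∈ W, π ^ (a - 1) * C x y ≠ 0 := by
    by_contra h
    push_neg at h
    obtain ⟨m, hm, hm0⟩ := hamin
    apply hm0
    apply hndg _ (W.smul_mem _ hm)
    intro y hy
    rw [map_smul, LinearMap.smul_apply, smul_eq_mul]
    exact h m hm y hy
  have hCa : ∀ m ∈ W, ∀ z ∈ W, π ^ a * C m z = 0 := by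
    intro m hm z hz
    have h1 : C m (π ^ a • z) = 0 := by rw [haW z hz, map_zero]
    rw [map_smul, smul_eq_mul] at h1
    exact h1
  obtain ⟨r, v, hvW, hsolve, hker, i0', j0', hvne⟩ :
      ∃ (r : ℕ) (v : Fin r → M), (∀ i, v i ∈ W) ∧
        (∀ m ∈ W, ∃ c : Fin r → R, ∀ i, C (∑ j, c j • v j) (v i) = C m (v i)) ∧
        (∀ c : Fin r → R, (∀ i, C (∑ j, c j • v j) (v i) = 0) → ∀ i, c i ∈ Ideal.span {π ^ a}) ∧
        ∃ i j, C (v i) (v j) ≠ 0 := by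
    by_cases hA : ∃ z ∈ W, π ^ (a - 1) * C z z ≠ 0
    · -- rank one case
      obtain ⟨z, hzW, hzz⟩ := hA
      obtain ⟨w, hwu, hw⟩ := exists_unit_gen hπ hn0 hne ha1 han (hCa z hzW z hzW) hzz
      obtain ⟨winv, hwinv⟩ := isUnit_iff_exists_inv.mp hwu
      refine ⟨1, fun _ => z, fun _ => hzW, ?_, ?_, 0, 0, ?_⟩
      · intro m hm
        have h1 : C m z ∈ Ideal.span {π ^ (n - a)} :=
          mem_ann_pow hπ hn0 hne han (by rw [mul_comm]; exact hCa m hm z hzW)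
        obtain ⟨d, hd⟩ := Ideal.mem_span_singleton'.mp h1
        refine ⟨fun _ => d * winv, fun i => ?_⟩
        rw [Fin.sum_univ_one, map_smul, LinearMap.smul_apply, smul_eq_mul, hw]
        show d * winv * (w * π ^ (n - a)) = C m z
        rw [← hd]
        linear_combination (d * π ^ (n - a)) * hwinv
      · intro c hc
        have h0 := hc 0
        rw [Fin.sum_univ_one, map_smul, LinearMap.smul_apply, smul_eq_mul, hw] at h0
        have h1 : (c 0 * w) * π ^ (n - a) = 0 := by linear_combination h0
        have h2 : c 0 * w ∈ Ideal.span {π ^ (n - (n - a))} :=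
          mem_ann_pow hπ hn0 hne (by omega) h1
        rw [show n - (n - a) = a from by omega] at h2
        intro i
        have h3 : c i = (c 0 * w) * winv := by
          have h4 : c i = c 0 := by congr 1; exact Subsingleton.elim i 0
          rw [h4]
          linear_combination (-(c 0)) * hwinv
        rw [h3]
        exact Ideal.mul_mem_right _ _ h2
      · intro h
        apply hzz
        rw [h, mul_zero]
    · -- rank two case
      push_neg at hA
      obtain ⟨x, hxW, y, hyW, hbne⟩ := hxy
      obtain ⟨w, hwu, hw⟩ := exists_unit_gen hπ hn0 hne ha1 han (hCa x hxW y hyW) hbne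
      have hax : C x x ∈ Ideal.span {π ^ (n - (a - 1))} :=
        mem_ann_pow hπ hn0 hne (by omega) (by rw [mul_comm]; exact hA x hxW)
      rw [show n - (a - 1) = (n - a) + 1 from by omega] at hax
      obtain ⟨t, ht⟩ := Ideal.mem_span_singleton'.mp hax
      have hxx : C x x = (t * π) * π ^ (n - a) := by rw [← ht, pow_succ]; ring
      have hay : C y y ∈ Ideal.span {π ^ (n - (a - 1))} :=
        mem_ann_pow hπ hn0 hne (by omega) (by rw [mul_comm]; exact hA y hyW)
      rw [show n - (a - 1) = (n - a) + 1 from by omega] at hay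
      obtain ⟨s, hs⟩ := Ideal.mem_span_singleton'.mp hay
      have hyy : C y y = (s * π) * π ^ (n - a) := by rw [← hs, pow_succ]; ring
      have hyx : C y x = w * π ^ (n - a) := by rw [hC y x]; exact hw
      have hΔu : IsUnit (t * π * (s * π) - w * w) := by
        rw [← IsLocalRing.notMem_maximalIdeal]
        intro hmem2
        have h1 : t * π * (s * π) ∈ IsLocalRing.maximalIdeal R := by
          rw [hπ]
          exact Ideal.mem_span_singleton'.mpr ⟨t * (s * π), by ring⟩
        have hw2 : w * w ∈ IsLocalRing.maximalIdeal R := by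
          have h2 := Submodule.sub_mem _ h1 hmem2
          rw [show t * π * (s * π) - (t * π * (s * π) - w * w) = w * w from by ring] at h2
          exact h2
        have hprime : (IsLocalRing.maximalIdeal R).IsPrime :=
          Ideal.IsMaximal.isPrime (IsLocalRing.maximalIdeal.isMaximal R)
        have hwm : w ∈ IsLocalRing.maximalIdeal R := by
          rcases hprime.mem_or_mem hw2 with h | h <;> exact h
        exact (IsLocalRing.notMem_maximalIdeal.mpr hwu) hwm
      obtain ⟨Δinv, hΔinv⟩ := isUnit_iff_exists_inv.mp hΔu
      have hsum : ∀ c : Fin 2 → R, (∑ j, c j • (![x, y] : Fin 2 → M) j) = c 0 • x + c 1 • y := by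
        intro c
        simp [Fin.sum_univ_two]
      have hCsum : ∀ c : Fin 2 → R, ∀ z : M,
          C (c 0 • x + c 1 • y) z = c 0 * C x z + c 1 * C y z := by
        intro c z
        simp [map_add, map_smul, LinearMap.add_apply, LinearMap.smul_apply, smul_eq_mul]
      refine ⟨2, ![x, y], ?_, ?_, ?_, 0, 1, ?_⟩
      · intro i
        fin_cases i
        · simpa using hxW
        · simpa using hyW
      · intro m hm
        have h1 : C m x ∈ Ideal.span {π ^ (n - a)} :=
          mem_ann_pow hπ hn0 hne han (by rw [mul_comm]; exact hCa m hm x hxW)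
        obtain ⟨d₁, hd₁⟩ := Ideal.mem_span_singleton'.mp h1
        have h2 : C m y ∈ Ideal.span {π ^ (n - a)} :=
          mem_ann_pow hπ hn0 hne han (by rw [mul_comm]; exact hCa m hm y hyW)
        obtain ⟨d₂, hd₂⟩ := Ideal.mem_span_singleton'.mp h2
        refine ⟨![Δinv * ((s * π) * d₁ - w * d₂), Δinv * ((t * π) * d₂ - w * d₁)], fun i => ?_⟩
        rw [hsum]
        fin_cases i
        · show C _ x = C m x
          rw [hCsum]
          show Δinv * ((s * π) * d₁ - w * d₂) * C x x
            + Δinv * ((t * π) * d₂ - w * d₁) * C y x = C m x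
          rw [hxx, hyx, ← hd₁]
          linear_combination (d₁ * π ^ (n - a)) * hΔinv
        · show C _ y = C m y
          rw [hCsum]
          show Δinv * ((s * π) * d₁ - w * d₂) * C x y
            + Δinv * ((t * π) * d₂ - w * d₁) * C y y = C m y
          rw [hw, hyy, ← hd₂]
          linear_combination (d₂ * π ^ (n - a)) * hΔinv
      · intro c hc
        have h0 := hc 0
        have h1 := hc 1
        rw [hsum] at h0 h1
        have h0' : c 0 * C x x + c 1 * C y x = 0 := by
          rw [← hCsum]
          exact h0
        have h1' : c 0 * C x y + c 1 * C y y = 0 := by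
          rw [← hCsum]
          exact h1
        have e0 : (c 0 * (t * π) + c 1 * w) * π ^ (n - a) = 0 := by
          rw [hxx, hyx] at h0'
          linear_combination h0'
        have e1 : (c 0 * w + c 1 * (s * π)) * π ^ (n - a) = 0 := by
          rw [hw, hyy] at h1'
          linear_combination h1'
        have hp : c 0 * (t * π) + c 1 * w ∈ Ideal.span {π ^ (n - (n - a))} :=
          mem_ann_pow hπ hn0 hne (by omega) e0
        have hq : c 0 * w + c 1 * (s * π) ∈ Ideal.span {π ^ (n - (n - a))} :=
          mem_ann_pow hπ hn0 hne (by omega) e1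
        rw [show n - (n - a) = a from by omega] at hp hq
        have hc0 : c 0 = Δinv * ((s * π) * (c 0 * (t * π) + c 1 * w)
            - w * (c 0 * w + c 1 * (s * π))) := by
          linear_combination (-(c 0)) * hΔinv
        have hc1 : c 1 = Δinv * ((t * π) * (c 0 * w + c 1 * (s * π))
            - w * (c 0 * (t * π) + c 1 * w)) := by
          linear_combination (-(c 1)) * hΔinv
        intro i
        fin_cases i
        · show c 0 ∈ Ideal.span {π ^ a}
          rw [hc0]
          exact Ideal.mul_mem_left _ _ (Ideal.sub_mem _
            (Ideal.mul_mem_left _ _ hp) (Ideal.mul_mem_left _ _ hq))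
        · show c 1 ∈ Ideal.span {π ^ a}
          rw [hc1]
          exact Ideal.mul_mem_left _ _ (Ideal.sub_mem _
            (Ideal.mul_mem_left _ _ hq) (Ideal.mul_mem_left _ _ hp))
      · show C x y ≠ 0
        intro h
        apply hbne
        rw [h, mul_zero]
  -- common part
  set U := Submodule.span R (Set.range v) with hU
  have hUW : U ≤ W := Submodule.span_le.mpr (by rintro _ ⟨i, rfl⟩; exact hvW i)
  have hmemU : ∀ {m : M}, m ∈ U ↔ ∃ c : Fin r → R, ∑ i, c i • v i = m :=
    fun {m} => Submodule.mem_span_range_iff_exists_fun R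
  have hUkill : ∀ i, π ^ a • v i = 0 := fun i => haW _ (hvW i)
  have hdisj0 : ∀ m ∈ U, (∀ i, C m (v i) = 0) → m = 0 := by
    intro m hm h0
    obtain ⟨c, rfl⟩ := hmemU.mp hm
    have hci := hker c (fun i => h0 i)
    exact Finset.sum_eq_zero (fun i _ => smul_eq_zero_of_mem (hci i) (hUkill i))
  have horthU : ∀ m : M, (∀ i, C m (v i) = 0) → ∀ u ∈ U, C m u = 0 := by
    intro m h0 u hu
    obtain ⟨c, rfl⟩ := hmemU.mp hu
    rw [map_sum]
    apply Finset.sum_eq_zero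
    intro i _
    rw [map_smul, smul_eq_mul, h0 i, mul_zero]
  set W' := W ⊓ orth C U with hW'def
  have hdecomp : ∀ m ∈ W, ∃ u ∈ U, m - u ∈ W' := by
    intro m hm
    obtain ⟨c, hc⟩ := hsolve m hm
    refine ⟨∑ i, c i • v i, hmemU.mpr ⟨c, rfl⟩, ?_⟩
    rw [hW'def, Submodule.mem_inf]
    constructor
    · exact W.sub_mem hm (hUW (hmemU.mpr ⟨c, rfl⟩))
    · rw [mem_orth]
      apply horthU
      intro i
      rw [map_sub, LinearMap.sub_apply, hc i, sub_self]
  have hW'lt : W' < W := by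
    refine lt_of_le_of_ne inf_le_left (fun hEq => ?_)
    have h1 : v i0' ∈ W' := by rw [hEq]; exact hvW i0'
    refine hvne ?_
    exact (mem_orth.mp (Submodule.mem_inf.mp h1).2) (v j0') (Submodule.subset_span ⟨j0', rfl⟩)
  have hndg' : ∀ x ∈ W', (∀ y ∈ W', C x y = 0) → x = 0 := by
    intro z hz h0
    apply hndg z (Submodule.mem_inf.mp hz).1
    intro y hy
    obtain ⟨u, hu, hyu⟩ := hdecomp y hy
    have h1 : C z u = 0 := (mem_orth.mp (Submodule.mem_inf.mp hz).2) u hu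
    have h2 : C z (y - u) = 0 := h0 _ hyu
    calc C z y = C z ((y - u) + u) := by rw [sub_add_cancel]
      _ = 0 := by rw [map_add, h1, h2, add_zero]
  obtain ⟨V', k', hV'W, hind', hsup', horth', hfree'⟩ := IH W' hW'lt hndg'
  have hUdisjW' : ∀ m ∈ U, m ∈ W' → m = 0 := by
    intro m hmU hmW'
    exact hdisj0 m hmU (fun i =>
      (mem_orth.mp (Submodule.mem_inf.mp hmW').2) (v i) (Submodule.subset_span ⟨i, rfl⟩))
  have hi0n : a - 1 < n := by omega
  set i₀ : Fin n := ⟨a - 1, hi0n⟩ with hi₀def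
  have hi₀val : i₀.val + 1 = a := by
    simp only [hi₀def]
    omega
  set V : Fin n → Submodule R M := Function.update V' i₀ (U ⊔ V' i₀) with hVdef
  set k : Fin n → ℕ := Function.update k' i₀ (r + k' i₀) with hkdef
  have hVi₀ : V i₀ = U ⊔ V' i₀ := Function.update_self _ _ _
  have hki₀ : k i₀ = r + k' i₀ := Function.update_self _ _ _
  have hVne : ∀ i, i ≠ i₀ → V i = V' i := fun i hi => Function.update_of_ne hi _ _
  have hkne : ∀ i, i ≠ i₀ → k i = k' i := fun i hi => Function.update_of_ne hi _ _
  have hV'le : ∀ i, V' i ≤ V i := by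
    intro i
    by_cases h : i = i₀
    · subst h; rw [hVi₀]; exact le_sup_right
    · rw [hVne i h]
  have hVle : ∀ i, V i ≤ U ⊔ V' i := by
    intro i
    by_cases h : i = i₀
    · subst h; rw [hVi₀]
    · rw [hVne i h]; exact le_sup_right
  have hUorthW' : ∀ u ∈ U, ∀ z ∈ W', C u z = 0 := by
    intro u hu z hz
    rw [hC]
    exact (mem_orth.mp (Submodule.mem_inf.mp hz).2) u hu
  have hUW'sup : U ⊔ W' = W := by
    apply le_antisymm (sup_le hUW inf_le_left)
    intro m hm
    obtain ⟨u, hu, hmu⟩ := hdecomp m hm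
    exact Submodule.mem_sup.mpr ⟨u, hu, m - u, hmu, by abel⟩
  refine ⟨V, k, ?_, ?_, ?_, ?_, ?_⟩
  · intro i
    exact (hVle i).trans (sup_le hUW ((hV'W i).trans inf_le_left))
  · rw [iSupIndep_def]
    intro i
    rw [Submodule.disjoint_def]
    intro z hzV hzS
    have hS'W' : (⨆ j, ⨆ _ : j ≠ i, V' j) ≤ W' := iSup_le fun j => iSup_le fun _ => hV'W j
    by_cases h : i = i₀
    · subst h
      have hzS' : z ∈ (⨆ j, ⨆ _ : j ≠ i₀, V' j) := by
        refine (iSup_le fun j => iSup_le fun hj => ?_ :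
          (⨆ j, ⨆ _ : j ≠ i₀, V j) ≤ (⨆ j, ⨆ _ : j ≠ i₀, V' j)) hzS
        exact (hVne j hj).le.trans (le_iSup₂ (f := fun j _ => V' j) j hj)
      have hzW' : z ∈ W' := hS'W' hzS'
      rw [hVi₀] at hzV
      obtain ⟨u, huU, p, hpV', hup⟩ := Submodule.mem_sup.mp hzV
      have hpW' : p ∈ W' := hV'W i₀ hpV'
      have huW' : u ∈ W' := by
        have h2 : u = z - p := eq_sub_of_add_eq hup
        rw [h2]; exact W'.sub_mem hzW' hpW'
      have hu0 : u = 0 := hUdisjW' u huU huW'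
      have hzp : z = p := by rw [← hup, hu0, zero_add]
      rw [hzp]
      exact Submodule.disjoint_def.mp (hind' i₀) p hpV' (by rw [← hzp]; exact hzS')
    · have hzV' : z ∈ V' i := (hVne i h) ▸ hzV
      have hzW' : z ∈ W' := hV'W i hzV'
      have hS_le : (⨆ j, ⨆ _ : j ≠ i, V j) ≤ U ⊔ (⨆ j, ⨆ _ : j ≠ i, V' j) := by
        refine iSup_le fun j => iSup_le fun hj => (hVle j).trans (sup_le_sup_left ?_ U)
        exact le_iSup₂ (f := fun j _ => V' j) j hj
      obtain ⟨u, huU, p, hpS', hup⟩ := Submodule.mem_sup.mp (hS_le hzS)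
      have hpW' : p ∈ W' := hS'W' hpS'
      have huW' : u ∈ W' := by
        have h2 : u = z - p := eq_sub_of_add_eq hup
        rw [h2]; exact W'.sub_mem hzW' hpW'
      have hu0 : u = 0 := hUdisjW' u huU huW'
      have hzp : z = p := by rw [← hup, hu0, zero_add]
      exact Submodule.disjoint_def.mp (hind' i) z hzV' (by rw [hzp]; exact hpS')
  · apply le_antisymm
    · refine iSup_le fun i => (hVle i).trans ?_
      exact (sup_le_sup_left (hV'W i) U).trans hUW'sup.le
    · rw [← hUW'sup]
      refine sup_le ?_ ?_
      · exact le_trans (le_sup_left.trans hVi₀.ge) (le_iSup V i₀)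
      · rw [← hsup']
        exact iSup_le fun i => (hV'le i).trans (le_iSup V i)
  · intro i j hij x hx y hy
    by_cases hi : i = i₀
    · subst hi
      rw [hVi₀] at hx
      obtain ⟨u, huU, p, hpV', hup⟩ := Submodule.mem_sup.mp hx
      have hyV' : y ∈ V' j := (hVne j (Ne.symm hij)) ▸ hy
      have hyW' : y ∈ W' := hV'W j hyV'
      rw [← hup, map_add, LinearMap.add_apply, hUorthW' u huU y hyW',
        horth' i₀ j hij p hpV' y hyV', add_zero]
    · by_cases hj : j = i₀
      · subst hj
        rw [hVi₀] at hy
        obtain ⟨u, huU, p, hpV', hup⟩ := Submodule.mem_sup.mp hy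
        have hxV' : x ∈ V' i := (hVne i hi) ▸ hx
        have hxW' : x ∈ W' := hV'W i hxV'
        rw [← hup, map_add]
        have h1 : C x u = 0 := by rw [hC]; exact hUorthW' u huU x hxW'
        rw [h1, horth' i i₀ hij x hxV' p hpV', add_zero]
      · exact horth' i j hij x ((hVne i hi) ▸ hx) y ((hVne j hj) ▸ hy)
  · intro i
    by_cases hi : i = i₀
    · subst hi
      have hfreeU : Nonempty
          (↥U ≃ₗ[R] (Fin r → R ⧸ (IsLocalRing.maximalIdeal R) ^ (i₀.val + 1))) := by
        apply piece_equiv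
        · intro i c hc
          rw [hmm, hi₀val] at hc
          exact smul_eq_zero_of_mem hc (hUkill i)
        · intro c hc i
          rw [hmm, hi₀val]
          apply hker
          intro i'
          rw [hc]
          simp
      obtain ⟨eU⟩ := hfreeU
      obtain ⟨eV⟩ := hfree' i₀
      have hd : Disjoint U (V' i₀) :=
        Submodule.disjoint_def.mpr (fun m hmU hmV => hUdisjW' m hmU (hV'W i₀ hmV))
      obtain ⟨eS⟩ := sup_equiv U (V' i₀) hd
      obtain ⟨eP⟩ := prod_fun_equiv
        (R := R) (R ⧸ (IsLocalRing.maximalIdeal R) ^ (i₀.val + 1)) r (k' i₀)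
      rw [hVi₀, hki₀]
      exact ⟨(eS.trans (LinearEquiv.prodCongr eU eV)).trans eP⟩
    · rw [hVne i hi, hkne i hi]
      exact hfree' i


/-- Let `(R, 𝔪)` be a local commutative artinian principal ideal ring of length `n` as a
module over itself, `M` a finitely generated `R`-module, `N ≅ R`, and `⟨,⟩ : M × M → N` a
non-degenerate symmetric bilinear form.  Then `M` admits an orthogonal decomposition
`M = M_1 ⊥ ⋯ ⊥ M_n` where each `M_i` is free over `R/𝔪^i` (expressed by an `R`-linear
isomorphism with a finite power of `R/𝔪^i`) and the restriction of the form to each `M_i`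
is non-degenerate, i.e. `M_i ∩ M_i^⊥ = 0`. -/
theorem orthogonal_decomposition_local (R M N : Type*) [CommRing R] [IsLocalRing R]
    [IsArtinianRing R] [IsPrincipalIdealRing R] [AddCommGroup M] [Module R M]
    [Module.Finite R M] [AddCommGroup N] [Module R N] (e : N ≃ₗ[R] R)
    (n : ℕ) (hn : Order.krullDim (Submodule R R) = (n : WithBot ℕ∞))
    (B : M →ₗ[R] M →ₗ[R] N) (hB : ∀ x y, B x y = B y x) (hBnd : Function.Bijective B) :
    ∃ (Mi : Fin n → Submodule R M) (k : Fin n → ℕ),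
      DirectSum.IsInternal Mi ∧
      (∀ i j, i ≠ j → ∀ x ∈ Mi i, ∀ y ∈ Mi j, B x y = 0) ∧
      (∀ i, Nonempty
        (↥(Mi i) ≃ₗ[R] (Fin (k i) → R ⧸ (IsLocalRing.maximalIdeal R) ^ (i.val + 1)))) ∧
      (∀ i, Mi i ⊓ orth B (Mi i) = ⊥) := by
  classical
  obtain ⟨π, hπ0⟩ := Submodule.IsPrincipal.principal (IsLocalRing.maximalIdeal R)
  have hπ : IsLocalRing.maximalIdeal R = Ideal.span {π} := hπ0
  have hmm : ∀ b : ℕ, (IsLocalRing.maximalIdeal R) ^ b = Ideal.span {π ^ b} := by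
    intro b; rw [hπ, Ideal.span_singleton_pow]
  -- nilpotency of the maximal ideal
  have hjac : IsLocalRing.maximalIdeal R = Ideal.jacobson ⊥ :=
    (IsLocalRing.jacobson_eq_maximalIdeal ⊥ bot_ne_top).symm
  obtain ⟨k0, hk0⟩ := IsArtinianRing.isNilpotent_jacobson_bot (R := R)
  rw [← hjac] at hk0
  have hexkk : ∃ j, (IsLocalRing.maximalIdeal R) ^ j = ⊥ := ⟨k0, by rw [hk0]; rfl⟩
  set kk := Nat.find hexkk with hkkdef
  have hkk0 : (IsLocalRing.maximalIdeal R) ^ kk = ⊥ := Nat.find_spec hexkk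
  have hkkmin : ∀ j, j < kk → (IsLocalRing.maximalIdeal R) ^ j ≠ ⊥ :=
    fun j hj => Nat.find_min hexkk hj
  have hπkk : π ^ kk = 0 := by
    have h1 : π ^ kk ∈ (IsLocalRing.maximalIdeal R) ^ kk := by
      apply Ideal.pow_mem_pow
      rw [hπ]
      exact Submodule.mem_span_singleton_self π
    rw [hkk0] at h1
    simpa using h1
  have hstrict : ∀ j, j < kk →
      (IsLocalRing.maximalIdeal R) ^ (j + 1) < (IsLocalRing.maximalIdeal R) ^ j := by
    intro j hj
    refine lt_of_le_of_ne (Ideal.pow_le_pow_right (by omega)) (fun hEq => ?_)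
    have hiter : ∀ i, (IsLocalRing.maximalIdeal R) ^ (j + i) = (IsLocalRing.maximalIdeal R) ^ j := by
      intro i
      induction i with
      | zero => rfl
      | succ i ih =>
        rw [show j + (i + 1) = (j + i) + 1 from rfl, pow_succ, ih, ← pow_succ, hEq]
    have h2 := hiter (kk - j)
    rw [show j + (kk - j) = kk from by omega, hkk0] at h2
    exact hkkmin j hj h2.symm
  have hkn : kk ≤ n := by
    let p : LTSeries (Submodule R R) := {
      length := kk
      toFun := fun i => (IsLocalRing.maximalIdeal R) ^ (kk - i.val)
      step := fun i => by
        show (IsLocalRing.maximalIdeal R) ^ (kk - i.castSucc.val)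
          < (IsLocalRing.maximalIdeal R) ^ (kk - i.succ.val)
        rw [Fin.coe_castSucc, Fin.val_succ,
          show kk - i.val = (kk - (i.val + 1)) + 1 from by omega]
        exact hstrict _ (by omega) }
    have hlen := Order.LTSeries.length_le_krullDim p
    rw [hn] at hlen
    exact_mod_cast hlen
  have hclass : ∀ I : Submodule R R, ∃ j, j ≤ kk ∧ I = (IsLocalRing.maximalIdeal R) ^ j := by
    intro I
    by_cases hI : I = ⊥
    · exact ⟨kk, le_refl _, by rw [hI, hkk0]⟩
    · obtain ⟨c, hc⟩ := Submodule.IsPrincipal.principal I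
      have hc0 : c ≠ 0 := by
        rintro rfl
        apply hI
        rw [hc]
        simp
      obtain ⟨j, hjk, t, htu, hct⟩ := exists_unit_rep hπ hπkk hc0
      refine ⟨j, by omega, ?_⟩
      have h2 : Ideal.span {t * π ^ j} = (IsLocalRing.maximalIdeal R) ^ j := by
        rw [Ideal.span_singleton_mul_left_unit htu, hmm]
      rw [hc, hct]
      exact h2
  have hb : ∀ p : LTSeries (Submodule R R), p.length ≤ kk := by
    intro p
    choose jf hjf1 hjf2 using fun i => hclass (p.toFun i)
    have hanti : ∀ i i' : Fin (p.length + 1), i < i' → jf i' < jf i := by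
      intro i i' hlt
      have hplt : p.toFun i < p.toFun i' := p.strictMono hlt
      rw [hjf2 i, hjf2 i'] at hplt
      by_contra hle
      exact absurd (Ideal.pow_le_pow_right (by omega : jf i ≤ jf i')) (not_le_of_gt hplt)
    let f : Fin (p.length + 1) → Fin (kk + 1) := fun i => ⟨kk - jf i, by omega⟩
    have hinj : Function.Injective f := by
      intro i i' h
      by_contra hne'
      have h2 := congrArg Fin.val h
      simp only [f] at h2
      rcases lt_or_gt_of_ne hne' with h1 | h1
      · have h3 := hanti i i' h1
        have h4 := hjf1 i
        have h5 := hjf1 i'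
        omega
      · have h3 := hanti i' i h1
        have h4 := hjf1 i
        have h5 := hjf1 i'
        omega
    have hcard := Fintype.card_le_of_injective f hinj
    simp only [Fintype.card_fin] at hcard
    omega
  have hnk : n ≤ kk := by
    have hkd : Order.krullDim (Submodule R R) ≤ (kk : WithBot ℕ∞) := by
      rw [Order.krullDim_eq_iSup_length]
      have h1 : (⨆ p : LTSeries (Submodule R R), (p.length : ℕ∞)) ≤ (kk : ℕ∞) :=
        iSup_le fun p => by exact_mod_cast hb p
      exact_mod_cast h1
    rw [hn] at hkd
    exact_mod_cast hkd
  have hkkn : kk = n := le_antisymm hkn hnk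
  have hπn : π ^ n = 0 := by rw [← hkkn]; exact hπkk
  have hπne : ∀ j, j < n → π ^ j ≠ 0 := by
    intro j hj h0
    apply hkkmin j (by omega)
    rw [hmm j, h0]
    simp
  -- the R-valued form
  set C : M →ₗ[R] M →ₗ[R] R := B.compr₂ e.toLinearMap with hCdef
  have hCB : ∀ x y, C x y = e (B x y) := fun x y => rfl
  have hCsymm : ∀ x y, C x y = C y x := fun x y => by rw [hCB, hCB, hB]
  have hCzero : ∀ x y, C x y = 0 ↔ B x y = 0 := by
    intro x y
    rw [hCB]
    constructor
    · intro h
      exact e.injective (by rw [h, map_zero])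
    · intro h
      rw [h, map_zero]
  have hndg : ∀ x ∈ (⊤ : Submodule R M), (∀ y ∈ (⊤ : Submodule R M), C x y = 0) → x = 0 := by
    intro x _ h
    have hBx : B x = B 0 := by
      rw [map_zero]
      ext y
      exact (hCzero x y).mp (h y trivial)
    exact hBnd.injective hBx
  obtain ⟨V, k, _, hind, hsup, horthC, hfree⟩ :=
    decomposition_aux π n hπ hπn hπne C hCsymm ⊤ hndg
  refine ⟨V, k, ?_, ?_, hfree, ?_⟩
  · exact DirectSum.isInternal_submodule_of_iSupIndep_of_iSup_eq_top hind hsup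
  · intro i j hij x hx y hy
    exact (hCzero x y).mp (horthC i j hij x hx y hy)
  · intro i
    rw [eq_bot_iff]
    intro z hz
    obtain ⟨hzV, hzO⟩ := Submodule.mem_inf.mp hz
    have hzC : ∀ y : M, C z y = 0 := by
      intro y
      have hy : y ∈ (⨆ j, V j) := by rw [hsup]; trivial
      refine Submodule.iSup_induction V (motive := fun m => C z m = 0) hy ?_ (map_zero _) ?_
      · intro i' w hw
        by_cases h : i' = i
        · subst h
          exact (hCzero z w).mpr ((mem_orth.mp hzO) w hw)
        · exact horthC i i' (fun hEq => h hEq.symm) z hzV w hw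
      · intro m₁ m₂ h₁ h₂
        rw [map_add, h₁, h₂, add_zero]
    have hz0 : z = 0 := hndg z trivial (fun y _ => hzC y)
    simp [hz0]
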